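/- Let 0 < p < 1, q = 1 − p, and r ≥ 1. For n ≥ 0 define z_n as the probability that in n independent Bernoulli trials with success probability p there is no run of r consecutive successes; equivalently z_n = Σ_{s ∈ {0,1}^n, s has no r consecutive 1's} p^{#{i : s_i = 1}} q^{#{i : s_i = 0}}. Then in the ring ℝ⟦X⟧ of formal power series over the reals, the generating function G(X) = Σ_{n≥0} z_n·X^n satisfies G(X)·(1 − X + q·p^r·X^{r+1}) = 1 − p^r·X^r; that is, G(X) = (1 − p^r X^r)/(1 − X + q p^r X^{r+1}). -/

import Mathlib

open PowerSeries

/-- `hasRun r s` means the Boolean sequence `s` of length `n` contains a run of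
`r` consecutive `true`s (successes). -/
def hasRun (r : ℕ) {n : ℕ} (s : Fin n → Bool) : Prop :=
  ∃ i : ℕ, i + r ≤ n ∧ ∀ j < r, ∀ h : i + j < n, s ⟨i + j, h⟩ = true

open Classical in
/-- The probability that `n` independent Bernoulli(p) trials contain no run of
`r` consecutive successes: the sum over all success/failure sequences without a
run of `r` successes of `p^(#successes) * (1-p)^(#failures)`. -/
noncomputable def noRunProb (p : ℝ) (r n : ℕ) : ℝ :=
  ∑ s ∈ Finset.univ.filter (fun s : Fin n → Bool => ¬ hasRun r s),
    p ^ (Finset.univ.filter (fun i : Fin n => s i = true)).card *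
      (1 - p) ^ (Finset.univ.filter (fun i : Fin n => s i = false)).card

/- ### Auxiliary list lemmas -/

lemma aux_replicate_infix_append_cons {r : ℕ} (x y : List Bool)
    (h : List.replicate r true <:+: x ++ false :: y) :
    List.replicate r true <:+: x ∨ List.replicate r true <:+: y := by
  obtain ⟨a, b, hab⟩ := h
  rcases le_or_gt (a.length + r) x.length with hle | hgt
  · left
    have h1 : List.take x.length (a ++ List.replicate r true ++ b)
        = (a ++ List.replicate r true) ++ List.take (x.length - (a.length + r)) b := by
      rw [List.take_append, List.take_of_length_le (by simp; omega)]
      simp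
    have h2 : List.take x.length (x ++ false :: y) = x := List.take_left
    rw [hab, h2] at h1
    exact ⟨a, _, by rw [← h1]⟩
  · rcases le_or_gt a.length x.length with hax | hax
    · -- contradiction: position x.length carries both false and true
      exfalso
      have hlen : x.length < (a ++ List.replicate r true ++ b).length := by
        rw [hab]; simp
      have e1 : (a ++ List.replicate r true ++ b)[x.length]'hlen = true := by
        rw [List.getElem_append_left (by simp; omega),
          List.getElem_append_right (by omega), List.getElem_replicate]
      have e2 : (a ++ List.replicate r true ++ b)[x.length]'hlen = false := by
        rw [List.getElem_of_eq hab, List.getElem_append_right (le_refl _)]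
        simp
      rw [e1] at e2; exact Bool.noConfusion e2
    · right
      have h1 : List.drop (x.length + 1) (a ++ (List.replicate r true ++ b))
          = List.drop (x.length + 1) a ++ (List.replicate r true ++ b) :=
        List.drop_append_of_le_length (by omega)
      have h2 : List.drop (x.length + 1) (x ++ false :: y) = y := by
        rw [show x ++ false :: y = (x ++ [false]) ++ y by simp,
          List.drop_left' (by simp)]
      rw [List.append_assoc] at hab
      rw [hab, h2] at h1
      exact ⟨List.drop (x.length + 1) a, b, by rw [h1, ← List.append_assoc]⟩

lemma aux_not_replicate_infix {r m : ℕ} (hm : m < r) :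
    ¬ List.replicate r true <:+: List.replicate m true := by
  intro h
  have := h.length_le
  simp at this; omega

lemma aux_infix_cons_false {r m : ℕ} (hm : m < r) (l : List Bool) :
    (List.replicate r true <:+: List.replicate m true ++ false :: l)
      ↔ List.replicate r true <:+: l := by
  constructor
  · intro h
    rcases aux_replicate_infix_append_cons _ _ h with h | h
    · exact absurd h (aux_not_replicate_infix hm)
    · exact h
  · intro h
    exact h.trans (List.IsSuffix.isInfix ⟨List.replicate m true ++ [false], by simp⟩)

lemma aux_hasRun_iff_infix {r n : ℕ} (s : Fin n → Bool) :
    hasRun r s ↔ List.replicate r true <:+: List.ofFn s := by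
  constructor
  · rintro ⟨i, hir, hs⟩
    refine ⟨(List.ofFn s).take i, (List.ofFn s).drop (i + r), ?_⟩
    have key : List.replicate r true = ((List.ofFn s).drop i).take r := by
      apply List.ext_getElem
      · simp; omega
      · intro j h1 h2
        rw [List.getElem_replicate, List.getElem_take, List.getElem_drop,
          List.getElem_ofFn]
        exact (hs j (by simpa using h1) _).symm
    rw [key, List.append_assoc, show i + r = i + r from rfl]
    rw [show (List.ofFn s).drop (i + r) = List.drop r ((List.ofFn s).drop i) by
      rw [List.drop_drop]]
    rw [List.take_append_drop, List.take_append_drop]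
  · rintro ⟨a, b, hab⟩
    have hlen : a.length + (r + b.length) = n := by
      simpa using congrArg List.length hab
    refine ⟨a.length, by omega, ?_⟩
    intro j hj h
    have hj2 : a.length + j < (a ++ List.replicate r true ++ b).length := by
      simp; omega
    have e : (a ++ List.replicate r true ++ b)[a.length + j]'hj2 = true := by
      rw [List.getElem_append_left (by simp; omega),
        List.getElem_append_right (by omega), List.getElem_replicate]
    rw [List.getElem_of_eq hab, List.getElem_ofFn] at e
    simpa using e

/- ### Weighted sums -/

open Classical in
noncomputable def runFreeSum (p : ℝ) (r m n : ℕ) : ℝ :=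
  ∑ s : Fin n → Bool,
    if List.replicate r true <:+: List.replicate m true ++ List.ofFn s then 0
    else ((List.ofFn s).map fun b => if b then p else 1 - p).prod

lemma aux_sum_split (f : List Bool → ℝ) (n : ℕ) :
    ∑ s : Fin (n + 1) → Bool, f (List.ofFn s)
      = (∑ s : Fin n → Bool, f (true :: List.ofFn s))
        + ∑ s : Fin n → Bool, f (false :: List.ofFn s) := by
  rw [← Equiv.sum_comp (Fin.consEquiv fun _ => Bool) (fun s => f (List.ofFn s)),
    Fintype.sum_prod_type]
  rw [Fintype.sum_bool]
  congr 1 <;> (apply Finset.sum_congr rfl; intro s _; rw [show (Fin.consEquiv fun _ => Bool) (_, s) = Fin.cons _ s from rfl, List.ofFn_cons])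

lemma runFreeSum_succ (p : ℝ) {r m : ℕ} (hm : m < r) (n : ℕ) :
    runFreeSum p r m (n + 1)
      = p * runFreeSum p r (m + 1) n + (1 - p) * runFreeSum p r 0 n := by
  classical
  rw [runFreeSum, aux_sum_split (fun l =>
    if List.replicate r true <:+: List.replicate m true ++ l then 0
    else (l.map fun b => if b then p else 1 - p).prod) n]
  congr 1
  · rw [runFreeSum, Finset.mul_sum]
    apply Finset.sum_congr rfl
    intro s _
    have hc : List.replicate m true ++ true :: List.ofFn s
        = List.replicate (m + 1) true ++ List.ofFn s := by
      rw [List.replicate_succ', List.append_assoc]; rfl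
    rw [hc]
    by_cases h : List.replicate r true <:+: List.replicate (m + 1) true ++ List.ofFn s
    · rw [if_pos h, if_pos h, mul_zero]
    · rw [if_neg h, if_neg h]
      simp [mul_comm]
  · rw [runFreeSum, Finset.mul_sum]
    apply Finset.sum_congr rfl
    intro s _
    rw [show (List.replicate 0 true : List Bool) ++ List.ofFn s = List.ofFn s by simp]
    by_cases h : List.replicate r true <:+: List.ofFn s
    · rw [if_pos ((aux_infix_cons_false hm _).mpr h), if_pos h, mul_zero]
    · rw [if_neg fun hh => h ((aux_infix_cons_false hm _).mp hh), if_neg h]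
      simp [mul_comm]

lemma runFreeSum_top (p : ℝ) (r n : ℕ) : runFreeSum p r r n = 0 := by
  classical
  rw [runFreeSum]
  apply Finset.sum_eq_zero
  intro s _
  rw [if_pos (List.IsPrefix.isInfix (List.prefix_append _ _))]

lemma runFreeSum_nil (p : ℝ) {r m : ℕ} (hm : m < r) : runFreeSum p r m 0 = 1 := by
  classical
  rw [runFreeSum, Fintype.sum_unique]
  rw [List.ofFn_zero, List.append_nil, if_neg (aux_not_replicate_infix hm)]
  simp

lemma aux_total (p : ℝ) :
    ∀ n : ℕ, (∑ s : Fin n → Bool,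
      ((List.ofFn s).map fun b => if b then p else 1 - p).prod) = 1 := by
  intro n
  induction n with
  | zero => rw [Fintype.sum_unique]; simp
  | succ n ih =>
    rw [aux_sum_split (fun l => (l.map fun b => if b then p else 1 - p).prod) n]
    have hA : ∀ l : List Bool,
        ((true :: l).map fun b => if b then p else 1 - p).prod
          = p * (l.map fun b => if b then p else 1 - p).prod := by
      intro l; simp
    have hB : ∀ l : List Bool,
        ((false :: l).map fun b => if b then p else 1 - p).prod
          = (1 - p) * (l.map fun b => if b then p else 1 - p).prod := by
      intro l; simp
    rw [Finset.sum_congr rfl fun s _ => hA _, Finset.sum_congr rfl fun s _ => hB _,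
      ← Finset.mul_sum, ← Finset.mul_sum, ih]
    ring

lemma runFreeSum_small (p : ℝ) {r n : ℕ} (hn : n < r) : runFreeSum p r 0 n = 1 := by
  classical
  rw [runFreeSum]
  refine Eq.trans ?_ (aux_total p n)
  apply Finset.sum_congr rfl
  intro s _
  rw [if_neg]
  intro h
  have := h.length_le
  simp at this; omega

lemma noRunProb_eq (p : ℝ) (r n : ℕ) : noRunProb p r n = runFreeSum p r 0 n := by
  classical
  rw [noRunProb, runFreeSum, Finset.sum_filter]
  apply Finset.sum_congr rfl
  intro s _
  have h1 : ¬ hasRun r s ↔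
      ¬ List.replicate r true <:+: List.replicate 0 true ++ List.ofFn s := by
    rw [aux_hasRun_iff_infix]; simp
  have h2 : p ^ (Finset.univ.filter (fun i : Fin n => s i = true)).card *
      (1 - p) ^ (Finset.univ.filter (fun i : Fin n => s i = false)).card
      = ((List.ofFn s).map fun b => if b then p else 1 - p).prod := by
    rw [List.map_ofFn, List.prod_ofFn]
    have hc : ∀ i ∈ (Finset.univ : Finset (Fin n)),
        ((fun b => if b then p else 1 - p) ∘ s) i
          = if s i = true then p else 1 - p := fun i _ => rfl
    rw [Finset.prod_congr rfl hc]
    rw [Finset.prod_ite (fun _ => p) (fun _ => 1 - p), Finset.prod_const,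
      Finset.prod_const]
    congr 2
    apply congrArg Finset.card
    apply Finset.filter_congr
    intro i _
    simp
  rw [if_congr h1 h2 rfl, ite_not]

lemma runFreeSum_unroll (p : ℝ) {r : ℕ} :
    ∀ d : ℕ, d ≤ r → ∀ n : ℕ, d ≤ n →
      runFreeSum p r (r - d) n
        = ∑ k ∈ Finset.range d, p ^ k * (1 - p) * runFreeSum p r 0 (n - 1 - k) := by
  intro d
  induction d with
  | zero =>
    intro _ n _
    simpa using runFreeSum_top p r n
  | succ d ih =>
    intro hd n hn
    obtain ⟨n', rfl⟩ : ∃ n', n = n' + 1 := ⟨n - 1, by omega⟩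
    rw [runFreeSum_succ p (show r - (d + 1) < r by omega) n']
    rw [show r - (d + 1) + 1 = r - d by omega]
    rw [ih (by omega) n' (by omega)]
    rw [Finset.sum_range_succ' (fun k => p ^ k * (1 - p) * runFreeSum p r 0 (n' + 1 - 1 - k)) d]
    rw [Finset.mul_sum]
    congr 1
    · apply Finset.sum_congr rfl
      intro k _
      rw [show n' + 1 - 1 - (k + 1) = n' - 1 - k by omega]
      ring
    · rw [show n' + 1 - 1 - 0 = n' by omega]
      ring

lemma runFreeSum_at_r (p : ℝ) {r : ℕ} (hr : 1 ≤ r) :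
    runFreeSum p r 0 r = 1 - p ^ r := by
  have h := runFreeSum_unroll p r (le_refl r) r (le_refl r)
  rw [Nat.sub_self] at h
  rw [h]
  have : ∀ k ∈ Finset.range r,
      p ^ k * (1 - p) * runFreeSum p r 0 (r - 1 - k) = p ^ k * (1 - p) := by
    intro k hk
    rw [runFreeSum_small p (show r - 1 - k < r by omega), mul_one]
  rw [Finset.sum_congr rfl this]
  have hg := geom_sum_mul p r
  have : ∑ k ∈ Finset.range r, p ^ k * (1 - p)
      = (∑ k ∈ Finset.range r, p ^ k) * (1 - p) := by
    rw [Finset.sum_mul]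
  rw [this]
  linear_combination (-1 : ℝ) * hg

lemma runFreeSum_rec (p : ℝ) {r : ℕ} (hr : 1 ≤ r) {n : ℕ} (hn : r + 1 ≤ n) :
    runFreeSum p r 0 n - runFreeSum p r 0 (n - 1)
      + (1 - p) * p ^ r * runFreeSum p r 0 (n - r - 1) = 0 := by
  obtain ⟨r', rfl⟩ : ∃ r', r = r' + 1 := ⟨r - 1, by omega⟩
  have h1 := runFreeSum_unroll p (r' + 1) (le_refl _) n (by omega)
  have h2 := runFreeSum_unroll p (r' + 1) (le_refl _) (n - 1) (by omega)
  rw [Nat.sub_self] at h1 h2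
  rw [Finset.sum_range_succ' (fun k => p ^ k * (1 - p) * runFreeSum p (r' + 1) 0 (n - 1 - k)) r'] at h1
  rw [Finset.sum_range_succ] at h2
  have e1 : runFreeSum p (r' + 1) 0 n
      = p * (∑ k ∈ Finset.range r',
          p ^ k * (1 - p) * runFreeSum p (r' + 1) 0 (n - 2 - k))
        + (1 - p) * runFreeSum p (r' + 1) 0 (n - 1) := by
    rw [h1, Finset.mul_sum]
    congr 1
    · apply Finset.sum_congr rfl
      intro k _
      rw [show n - 1 - (k + 1) = n - 2 - k by omega]
      ring
    · rw [show n - 1 - 0 = n - 1 by omega]; ring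
  have e2 : runFreeSum p (r' + 1) 0 (n - 1)
      = (∑ k ∈ Finset.range r',
          p ^ k * (1 - p) * runFreeSum p (r' + 1) 0 (n - 2 - k))
        + p ^ r' * (1 - p) * runFreeSum p (r' + 1) 0 (n - (r' + 1) - 1) := by
    rw [h2]
    have ha : ∀ k ∈ Finset.range r',
        p ^ k * (1 - p) * runFreeSum p (r' + 1) 0 (n - 1 - 1 - k)
          = p ^ k * (1 - p) * runFreeSum p (r' + 1) 0 (n - 2 - k) := by
      intro k _
      rw [show n - 1 - 1 - k = n - 2 - k by omega]
    rw [Finset.sum_congr rfl ha, show n - 1 - 1 - r' = n - (r' + 1) - 1 by omega]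
  linear_combination e1 - p * e2

theorem generating_function_noRunProb (p : ℝ) (hp : 0 < p) (hp1 : p < 1)
    (q : ℝ) (hq : q = 1 - p) (r : ℕ) (hr : 1 ≤ r) :
    (PowerSeries.mk fun n => noRunProb p r n) *
        ((1 : ℝ⟦X⟧) - X + C (q * p ^ r) * X ^ (r + 1)) =
      1 - C (p ^ r) * X ^ r := by
  subst hq
  set z : ℕ → ℝ := fun n => noRunProb p r n with hz
  have hzz : ∀ n, z n = runFreeSum p r 0 n := fun n => noRunProb_eq p r n
  have expand : (PowerSeries.mk z) * ((1 : ℝ⟦X⟧) - X + C ((1 - p) * p ^ r) * X ^ (r + 1))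
      = PowerSeries.mk z - (PowerSeries.mk z) * X ^ 1
        + C ((1 - p) * p ^ r) * ((PowerSeries.mk z) * X ^ (r + 1)) := by
    ring
  rw [expand]
  ext n
  simp only [map_add, map_sub, PowerSeries.coeff_mul_X_pow', PowerSeries.coeff_C_mul,
    PowerSeries.coeff_one, PowerSeries.coeff_C, PowerSeries.coeff_X_pow,
    PowerSeries.coeff_mk]
  rcases Nat.lt_or_ge n 1 with h0 | h1
  · have hn0 : n = 0 := by omega
    subst hn0
    rw [if_neg (by omega : ¬ 1 ≤ 0), if_neg (by omega : ¬ r + 1 ≤ 0),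
      if_pos rfl, if_neg (by omega : ¬ r ≤ 0)]
    rw [hzz 0, runFreeSum_small p (by omega : 0 < r)]
    ring
  · rcases Nat.lt_or_ge n r with hnr | hnr
    · rw [if_pos h1, if_neg (by omega : ¬ r + 1 ≤ n), if_neg (by omega : ¬ n = 0),
        if_neg (by omega : ¬ r ≤ n)]
      rw [hzz n, hzz (n - 1), runFreeSum_small p hnr,
        runFreeSum_small p (show n - 1 < r by omega)]
      ring
    · rcases Nat.eq_or_lt_of_le hnr with hnr' | hnr'
      · rw [if_pos h1, if_neg (by omega : ¬ r + 1 ≤ n), if_neg (by omega : ¬ n = 0),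
          if_pos hnr, if_pos (by omega : n - r = 0)]
        rw [hzz n, hzz (n - 1), ← hnr', runFreeSum_at_r p hr,
          runFreeSum_small p (show r - 1 < r by omega)]
        ring
      · rw [if_pos h1, if_pos (by omega : r + 1 ≤ n), if_neg (by omega : ¬ n = 0),
          if_pos (by omega : r ≤ n), if_neg (by omega : ¬ n - r = 0)]
        have hrec := runFreeSum_rec p hr (show r + 1 ≤ n by omega)
        rw [hzz n, hzz (n - 1), hzz (n - (r + 1)),
          show n - (r + 1) = n - r - 1 by omega]
        linear_combination hrec
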